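/- Let L₁,…,L_K be closed subspaces of a real Hilbert space H, y ∈ Y = L₁^⊥ + ⋯ + L_K^⊥ with y ≠ 0, and vⱼ = Pⱼ^⊥ P_{j-1} ⋯ P₁ y. Define ν(y) = (Σⱼ ‖vⱼ‖²)^{1/2} / ‖y‖ and let s(y) be the decomposition norm. Then ν(y) ≥ ‖y‖ / (K · s(y)). -/

import Mathlib

open scoped RealInnerProductSpace

/-- The decomposition norm `s(y) = inf { Σⱼ ‖yⱼ‖ : y = Σⱼ yⱼ, yⱼ ∈ Lⱼ^⊥ }`. -/
noncomputable def decompNorm {H : Type*} [NormedAddCommGroup H] [InnerProductSpace ℝ H]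
    {K : ℕ} (L : Fin K → Submodule ℝ H) (y : H) : ℝ :=
  sInf {r : ℝ | ∃ f : Fin K → H, (∀ j, f j ∈ (L j)ᗮ) ∧ y = ∑ j, f j ∧ r = ∑ j, ‖f j‖}

theorem nu_ge_norm_div_K_mul_decompNorm
    {H : Type*} [NormedAddCommGroup H] [InnerProductSpace ℝ H] [CompleteSpace H]
    {K : ℕ} (hK : 0 < K) (L : Fin K → Submodule ℝ H)
    (hclosed : ∀ k, IsClosed ((L k : Set H))) [∀ k, CompleteSpace (L k)]
    (y : H) (hy : ∃ f : Fin K → H, (∀ j, f j ∈ (L j)ᗮ) ∧ y = ∑ j, f j)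
    (hy0 : y ≠ 0)
    (z : ℕ → H) (hz0 : z 0 = y)
    (hz : ∀ j : Fin K, z ((j : ℕ) + 1) = (Submodule.orthogonalProjection (L j) (z j) : H))
    (v : Fin K → H) (hv : ∀ j : Fin K, v j = z j - z ((j : ℕ) + 1)) :
    Real.sqrt (∑ j, ‖v j‖ ^ 2) / ‖y‖ ≥ ‖y‖ / (K * decompNorm L y) := by
  set S := Real.sqrt (∑ j, ‖v j‖ ^ 2) with hSdef
  have hS0 : 0 ≤ S := Real.sqrt_nonneg _
  have hvS : ∀ j : Fin K, ‖v j‖ ≤ S := by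
    intro j
    have h1 : ‖v j‖ ^ 2 ≤ ∑ i, ‖v i‖ ^ 2 :=
      Finset.single_le_sum (f := fun i => ‖v i‖ ^ 2) (fun i _ => sq_nonneg _)
        (Finset.mem_univ j)
    calc ‖v j‖ = Real.sqrt (‖v j‖ ^ 2) := (Real.sqrt_sq (norm_nonneg _)).symm
      _ ≤ S := Real.sqrt_le_sqrt h1
  have key : ∀ f : Fin K → H, (∀ j, f j ∈ (L j)ᗮ) → y = ∑ j, f j →
      ‖y‖ ^ 2 ≤ ((K : ℝ) * S) * ∑ j, ‖f j‖ := by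
    intro f hf hsum
    have hterm : ∀ j : Fin K, (inner ℝ y (f j) : ℝ) ≤ ((K : ℝ) * S) * ‖f j‖ := by
      intro j
      have hz1 : z (↑j + 1) ∈ L j := by rw [hz j]; exact SetLike.coe_mem _
      have horth : (inner ℝ (z (↑j + 1)) (f j) : ℝ) = 0 :=
        (Submodule.mem_orthogonal (L j) (f j)).mp (hf j) _ hz1
      have hyz : (inner ℝ y (f j) : ℝ) = (inner ℝ (y - z (↑j + 1)) (f j) : ℝ) := by
        rw [inner_sub_left, horth]; ring
      have htel : y - z (↑j + 1) = ∑ m ∈ Finset.range (↑j + 1), (z m - z (m + 1)) := by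
        rw [Finset.sum_range_sub' z, hz0]
      have hnorm : ‖y - z (↑j + 1)‖ ≤ (K : ℝ) * S := by
        rw [htel]
        calc ‖∑ m ∈ Finset.range (↑j + 1), (z m - z (m + 1))‖
            ≤ ∑ m ∈ Finset.range (↑j + 1), ‖z m - z (m + 1)‖ := norm_sum_le _ _
          _ ≤ ∑ _m ∈ Finset.range (↑j + 1), S := by
              refine Finset.sum_le_sum fun m hm => ?_
              have hmK : m < K := lt_of_lt_of_le (Finset.mem_range.mp hm) j.2
              have h2 := hvS ⟨m, hmK⟩
              rwa [hv ⟨m, hmK⟩] at h2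
          _ = ((↑j + 1 : ℕ) : ℝ) * S := by rw [Finset.sum_const, nsmul_eq_mul, Finset.card_range]
          _ ≤ (K : ℝ) * S := by
              apply mul_le_mul_of_nonneg_right _ hS0
              exact_mod_cast Nat.succ_le_of_lt j.2
      calc (inner ℝ y (f j) : ℝ) = (inner ℝ (y - z (↑j + 1)) (f j) : ℝ) := hyz
        _ ≤ ‖y - z (↑j + 1)‖ * ‖f j‖ := real_inner_le_norm _ _
        _ ≤ ((K : ℝ) * S) * ‖f j‖ := mul_le_mul_of_nonneg_right hnorm (norm_nonneg _)
    calc ‖y‖ ^ 2 = (inner ℝ y y : ℝ) := (real_inner_self_eq_norm_sq y).symm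
      _ = ∑ j, (inner ℝ y (f j) : ℝ) := by rw [hsum, inner_sum]
      _ ≤ ∑ j, ((K : ℝ) * S) * ‖f j‖ := Finset.sum_le_sum fun j _ => hterm j
      _ = ((K : ℝ) * S) * ∑ j, ‖f j‖ := by rw [Finset.mul_sum]
  obtain ⟨f, hf, hsum⟩ := hy
  have hy2 : 0 < ‖y‖ ^ 2 := by
    have := norm_pos_iff.mpr hy0
    positivity
  have hSpos : 0 < S := by
    by_contra h
    have hSe : S = 0 := le_antisymm (not_lt.mp h) hS0
    have hk := key f hf hsum
    rw [hSe] at hk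
    simp at hk
    exact hy0 hk
  have hKS : 0 < (K : ℝ) * S := mul_pos (by exact_mod_cast hK) hSpos
  set s := decompNorm L y with hsdef
  have hslb : ‖y‖ ^ 2 / ((K : ℝ) * S) ≤ s := by
    rw [hsdef]
    unfold decompNorm
    refine le_csInf ⟨∑ j, ‖f j‖, ⟨f, hf, hsum, rfl⟩⟩ ?_
    rintro r ⟨g, hg, hgsum, rfl⟩
    rw [div_le_iff₀ hKS, mul_comm]
    exact key g hg hgsum
  have hspos : 0 < s := lt_of_lt_of_le (div_pos hy2 hKS) hslb
  have hyn : 0 < ‖y‖ := norm_pos_iff.mpr hy0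
  rw [ge_iff_le, div_le_div_iff₀ (mul_pos (by exact_mod_cast hK : (0:ℝ) < (K:ℝ)) hspos) hyn]
  have h3 : ‖y‖ ^ 2 ≤ s * ((K : ℝ) * S) := (div_le_iff₀ hKS).mp hslb
  calc ‖y‖ * ‖y‖ = ‖y‖ ^ 2 := (sq ‖y‖).symm
    _ ≤ s * ((K : ℝ) * S) := h3
    _ = S * ((K : ℝ) * s) := by ring
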